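/- Let 𝓗 = (V,H) be a finite loopless undirected hypergraph and let x ≠ y be vertices in the same connected component such that: (a) for every common neighbour z of x and y there is exactly one hyperedge containing {x,z} and exactly one hyperedge containing {y,z}, (b) d_x = d_y > 0, and (c) the equal-edges Ollivier–Ricci curvature κ_EE(x,y) equals 1. Then x and y have exactly the same neighbours, and for every common neighbour z the unique hyperedge containing {x,z} and the unique hyperedge containing {y,z} have the same cardinality (i.e. x and y are strongly structurally equivalent). -/

import Mathlib

/-!
STATEMENT 13: Let 𝓗 = (V,H) be a finite loopless undirected hypergraph and let
x ≠ y be vertices in the same connected component such that: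
(a) for every common neighbour z of x and y there is exactly one hyperedge
    containing {x,z} and exactly one hyperedge containing {y,z},
(b) d_x = d_y > 0, and
(c) the equal-edges Ollivier–Ricci curvature κ_EE(x,y) equals 1.
Then x and y have exactly the same neighbours, and for every common neighbour z
the unique hyperedge containing {x,z} and the unique hyperedge containing {y,z}
have the same cardinality (i.e. x and y are strongly structurally equivalent).
-/
open Finset

variable {V : Type*}

/-- Two distinct vertices are neighbours in the hypergraph `H` if some hyperedge
contains both. -/
def HNbr (H : Finset (Finset V)) (u v : V) : Prop :=
  u ≠ v ∧ ∃ e ∈ H, u ∈ e ∧ v ∈ e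

/-- `IsHPath H u v vs es` says that the list of vertices `vs` together with the
list of hyperedges `es` forms a path from `u` to `v` in the hypergraph `H`:
consecutive vertices lie in the corresponding hyperedge, and all vertices and
all hyperedges are distinct. -/
def IsHPath (H : Finset (Finset V)) (u v : V)
    (vs : List V) (es : List (Finset V)) : Prop :=
  vs.length = es.length + 1 ∧
  vs.head? = some u ∧ vs.getLast? = some v ∧
  vs.Nodup ∧ es.Nodup ∧ (∀ e ∈ es, e ∈ H) ∧
  ∀ i < es.length, vs.getD i u ∈ es.getD i ∅ ∧ vs.getD (i + 1) u ∈ es.getD i ∅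

/-- There is a path of length `n` between `u` and `v` in the hypergraph `H`. -/
def HPathLen (H : Finset (Finset V)) (n : ℕ) (u v : V) : Prop :=
  ∃ vs es, IsHPath H u v vs es ∧ es.length = n

/-- The shortest-path distance in a hypergraph: the minimum length of a path. -/
noncomputable def hdist (H : Finset (Finset V)) (u v : V) : ℕ :=
  sInf {n | HPathLen H n u v}

/-- A coupling of two measures `μ` and `ν` on a finite vertex set. -/
def IsCoupling [Fintype V] (μ ν : V → ℝ) (ξ : V → V → ℝ) : Prop :=
  (∀ u v, 0 ≤ ξ u v) ∧ (∀ u, ∑ v, ξ u v = μ u) ∧ (∀ v, ∑ u, ξ u v = ν v)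

/-- The 1-Wasserstein distance between `μ` and `ν` with respect to the distance
function `d`. -/
noncomputable def W1 [Fintype V] (d : V → V → ℝ) (μ ν : V → ℝ) : ℝ :=
  sInf {c | ∃ ξ : V → V → ℝ, IsCoupling μ ν ξ ∧ c = ∑ u, ∑ v, d u v * ξ u v}

-- The degree of a vertex: the number of hyperedges containing it.
open Classical in
noncomputable def hdeg (H : Finset (Finset V)) (x : V) : ℕ :=
  (H.filter (fun e => x ∈ e)).card

-- The equal-edges (EE) measure of a vertex `x`:
-- `μ_x^EE(z) = (1/d_x) · ∑_{e ∈ H, x ∈ e, z ∈ e, z ≠ x} 1/(|e|-1)`.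
open Classical in
noncomputable def muEE (H : Finset (Finset V)) (x : V) : V → ℝ :=
  fun z => (1 / (hdeg H x : ℝ)) *
    ∑ e ∈ H.filter (fun e => x ∈ e ∧ z ∈ e ∧ z ≠ x), 1 / ((e.card : ℝ) - 1)

/-- The equal-edges Ollivier–Ricci curvature of a pair of vertices. -/
noncomputable def kappaEE [Fintype V] (H : Finset (Finset V)) (x y : V) : ℝ :=
  1 - W1 (fun u v => (hdist H u v : ℝ)) (muEE H x) (muEE H y) / (hdist H x y)

lemma hnbr_symm {H : Finset (Finset V)} {u v : V} (h : HNbr H u v) : HNbr H v u :=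
  ⟨h.1.symm, h.2.imp fun _ ⟨he, hu, hv⟩ => ⟨he, hv, hu⟩⟩

lemma exists_pathlen_of_chain (H : Finset (Finset V)) :
    ∀ (N : ℕ) (l : List V), l.length = N → ∀ (hne : l ≠ []), l.Nodup →
      l.Chain' (HNbr H) →
      ∃ n, HPathLen H n (l.head hne) (l.getLast hne) := by
  intro N
  induction N using Nat.strong_induction_on with
  | _ N ih =>
    intro l hlen hne hnd hch
    classical
    have hlp : 0 < l.length := List.length_pos_iff.mpr hne
    let f : V → V → Finset V := fun a b => if h : HNbr H a b then h.2.choose else ∅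
    have hf : ∀ a b, HNbr H a b → f a b ∈ H ∧ a ∈ f a b ∧ b ∈ f a b := by
      intro a b h
      simp only [f, dif_pos h]
      exact ⟨h.2.choose_spec.1, h.2.choose_spec.2.1, h.2.choose_spec.2.2⟩
    set es : List (Finset V) := List.zipWith f l l.tail with hes
    have heslen : es.length = l.length - 1 := by
      simp only [hes, List.length_zipWith, List.length_tail]
      omega
    have hstep : ∀ i, (h : i + 1 < l.length) → HNbr H (l[i]'(by omega)) l[i+1] := by
      intro i h
      rw [List.Chain', List.isChain_iff_getElem] at hch
      simpa using hch i (by omega)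
    have hesget : ∀ i, (h : i < es.length) →
        es[i] = f (l[i]'(by omega)) (l[i+1]'(by omega)) := by
      intro i h
      simp only [hes, List.getElem_zipWith, List.getElem_tail]
    by_cases hnodup : es.Nodup
    · refine ⟨es.length, l, es, ⟨by omega, (List.head?_eq_head hne).symm ▸ rfl,
        ?_, hnd, hnodup, ?_, ?_⟩, rfl⟩
      · rw [List.getLast?_eq_getLast hne]
      · intro e heme
        rw [List.mem_iff_getElem] at heme
        obtain ⟨i, hi, rfl⟩ := heme
        rw [hesget i hi]
        exact (hf _ _ (hstep i (by omega))).1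
      · intro i hi
        have h1 : i < l.length := by omega
        have h2 : i + 1 < l.length := by omega
        rw [List.getD_eq_getElem l _ h1, List.getD_eq_getElem l _ h2,
          List.getD_eq_getElem es _ hi, hesget i hi]
        have := hf _ _ (hstep i h2)
        exact ⟨this.2.1, this.2.2⟩
    · -- duplicate edges: shortcut
      have hdup : ∃ i j, ∃ (hi : i < es.length) (hj : j < es.length), i < j ∧ es[i] = es[j] := by
        rw [List.nodup_iff_injective_get] at hnodup
        simp only [Function.Injective, not_forall] at hnodup
        obtain ⟨a, b, hab, hab'⟩ := hnodup
        rcases lt_or_gt_of_ne (fun h => hab' (Fin.ext h)) with h | h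
        · exact ⟨a, b, a.isLt, b.isLt, h, by simpa using hab⟩
        · exact ⟨b, a, b.isLt, a.isLt, h, by simpa using hab.symm⟩
      obtain ⟨i, j, hi, hj, hij, heq⟩ := hdup
      set l' : List V := l.take (i+1) ++ l.drop (j+1) with hl'
      have hj1 : j + 1 < l.length := by omega
      have hsub : List.Sublist l' l := by
        have h0 : List.drop (j+1) l = List.drop (j-i) (List.drop (i+1) l) := by
          rw [List.drop_drop]; congr 1; omega
        have h1 : List.Sublist (List.drop (j+1) l) (List.drop (i+1) l) :=
          h0 ▸ List.drop_sublist _ _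
        have h2 : List.Sublist l' (l.take (i+1) ++ l.drop (i+1)) := h1.append_left _
        rwa [List.take_append_drop] at h2
      have hlen' : l'.length = (i+1) + (l.length - (j+1)) := by
        simp [hl', List.length_take, List.length_drop]
        omega
      have hne' : l' ≠ [] := by
        intro h
        have h0 : l'.length = 0 := by rw [h]; rfl
        omega
      have hdropne : List.drop (j+1) l ≠ [] := by
        intro h
        have h0 := congrArg List.length h
        rw [List.length_drop] at h0
        simp only [List.length_nil] at h0
        omega
      have htakene : List.take (i+1) l ≠ [] := by
        intro h
        have h0 := congrArg List.length h
        rw [List.length_take] at h0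
        simp only [List.length_nil] at h0
        omega
      have hjunc : HNbr H (l[i]'(by omega)) l[j+1] := by
        have h1 := hf _ _ (hstep i (by omega))
        have h2 := hf _ _ (hstep j (by omega))
        rw [← hesget i hi] at h1
        rw [← hesget j hj] at h2
        refine ⟨?_, es[i], h1.1, h1.2.1, heq ▸ h2.2.2⟩
        intro hcon
        exact absurd ((List.Nodup.getElem_inj_iff hnd).mp hcon) (by omega)
      have hch' : l'.Chain' (HNbr H) := by
        rw [hl', List.Chain', List.isChain_append]
        refine ⟨List.IsChain.take hch _, List.IsChain.drop hch _, ?_⟩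
        intro a ha b hb
        rw [List.getLast?_eq_getLast htakene, Option.mem_some_iff] at ha
        rw [List.head?_eq_head hdropne, Option.mem_some_iff] at hb
        have hgl : (List.take (i+1) l).getLast htakene = l[i]'(by omega) := by
          rw [List.getLast_eq_getElem]
          rw [List.getElem_take]
          congr 1
          simp [List.length_take]
          omega
        have hhd : (List.drop (j+1) l).head hdropne = l[j+1] := by
          rw [List.head_eq_getElem, List.getElem_drop]
        rw [← ha, ← hb, hgl, hhd]
        exact hjunc
      have hhead : l'.head hne' = l.head hne := by
        show (List.take (i+1) l ++ List.drop (j+1) l).head hne' = l.head hne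
        rw [List.head_append_of_ne_nil htakene]
        rw [List.head_eq_getElem, List.head_eq_getElem, List.getElem_take]
      have hlast : l'.getLast hne' = l.getLast hne := by
        show (List.take (i+1) l ++ List.drop (j+1) l).getLast hne' = l.getLast hne
        rw [List.getLast_append_of_ne_nil _ hdropne]
        rw [List.getLast_eq_getElem, List.getLast_eq_getElem, List.getElem_drop]
        congr 1
        simp [List.length_drop]
        omega
      have hshort : l'.length < N := by
        rw [← hlen] at *
        omega
      obtain ⟨n, hn⟩ := ih l'.length hshort l' rfl hne' (hsub.nodup hnd) hch'
      exact ⟨n, hhead ▸ hlast ▸ hn⟩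

def HGraph (H : Finset (Finset V)) : SimpleGraph V where
  Adj a b := HNbr H a b
  symm := ⟨fun _ _ h => hnbr_symm h⟩
  loopless := ⟨fun _ h => h.1 rfl⟩

lemma reachable_of_chain' (H : Finset (Finset V)) :
    ∀ (l : List V) (hne : l ≠ []), l.Chain' (HNbr H) →
      (HGraph H).Reachable (l.head hne) (l.getLast hne) := by
  intro l
  induction l with
  | nil => simp
  | cons a t ih =>
    intro _ hch
    cases t with
    | nil => exact SimpleGraph.Reachable.refl a
    | cons b t' =>
      rw [List.Chain', List.isChain_cons_cons] at hch
      have h1 : (HGraph H).Reachable a b := SimpleGraph.Adj.reachable hch.1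
      have h2 := ih (List.cons_ne_nil b t') hch.2
      rw [List.getLast_cons (List.cons_ne_nil b t')]
      exact h1.trans h2

lemma reachable_of_pathlen {H : Finset (Finset V)} {n : ℕ} {u v : V}
    (h : HPathLen H n u v) : (HGraph H).Reachable u v := by
  obtain ⟨vs, es, ⟨hlen, hhd, hlast, hnd, _, hesH, hidx⟩, _⟩ := h
  have hne : vs ≠ [] := by
    intro hcon; rw [hcon] at hhd; simp at hhd
  have hch : vs.Chain' (HNbr H) := by
    rw [List.Chain', List.isChain_iff_getElem]
    intro i hi
    have hi1 : i + 1 < vs.length := by omega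
    have hie : i < es.length := by omega
    have := hidx i hie
    rw [List.getD_eq_getElem vs _ (by omega), List.getD_eq_getElem vs _ hi1,
      List.getD_eq_getElem es _ hie] at this
    refine ⟨?_, es[i], hesH _ (List.getElem_mem _), this.1, this.2⟩
    intro hcon
    exact absurd ((List.Nodup.getElem_inj_iff hnd).mp hcon) (by omega)
  have hr := reachable_of_chain' H vs hne hch
  have h1 : vs.head hne = u := by
    rw [← Option.some_inj, ← List.head?_eq_head hne, hhd]
  have h2 : vs.getLast hne = v := by
    rw [← Option.some_inj, ← List.getLast?_eq_getLast hne, hlast]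
  rwa [h1, h2] at hr

lemma pathlen_of_reachable {H : Finset (Finset V)} {u v : V}
    (h : (HGraph H).Reachable u v) : u = v ∨ ∃ n, HPathLen H n u v := by
  classical
  obtain ⟨w⟩ := h
  set p := w.toPath with hp
  have hnd : (p : (HGraph H).Walk u v).support.Nodup := p.2.support_nodup
  have hch : (p : (HGraph H).Walk u v).support.Chain' (HNbr H) :=
    SimpleGraph.Walk.isChain_adj_support (G := HGraph H) _
  have hne : (p : (HGraph H).Walk u v).support ≠ [] :=
    SimpleGraph.Walk.support_ne_nil _
  have hhd : (p : (HGraph H).Walk u v).support.head hne = u := by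
    rw [← Option.some_inj, ← List.head?_eq_head hne]
    rw [SimpleGraph.Walk.support_eq_cons]
    rfl
  have hlast : (p : (HGraph H).Walk u v).support.getLast hne = v := by
    rw [SimpleGraph.Walk.getLast_support] -- maybe name differs
  right
  have := exists_pathlen_of_chain H _ _ rfl hne hnd hch
  rwa [hhd, hlast] at this

lemma hpathlen_zero {H : Finset (Finset V)} {u v : V} (h : HPathLen H 0 u v) : u = v := by
  obtain ⟨vs, es, ⟨hlen, hhd, hlast, _, _, _, _⟩, hlen0⟩ := h
  rw [hlen0] at hlen
  obtain ⟨a, rfl⟩ := List.length_eq_one_iff.mp hlen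
  simp at hhd hlast
  rw [← hhd, ← hlast]

lemma one_le_hdist {H : Finset (Finset V)} {u v : V} (hne : u ≠ v)
    (h : ∃ n, HPathLen H n u v) : 1 ≤ hdist H u v := by
  have hmem := Nat.sInf_mem (s := {n | HPathLen H n u v}) h
  by_contra hcon
  have h0 : hdist H u v = 0 := by omega
  rw [hdist] at h0
  rw [h0] at hmem
  exact hne (hpathlen_zero hmem)

lemma term_pos {e : Finset V} (h : 2 ≤ e.card) : 0 < 1 / ((e.card : ℝ) - 1) := by
  have : (2 : ℝ) ≤ (e.card : ℝ) := by exact_mod_cast h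
  have : 0 < (e.card : ℝ) - 1 := by linarith
  positivity

lemma muEE_nonneg {H : Finset (Finset V)} (hl : ∀ e ∈ H, 2 ≤ e.card) (x z : V) :
    0 ≤ muEE H x z := by
  classical
  rw [muEE]
  apply mul_nonneg (by positivity)
  apply Finset.sum_nonneg
  intro e he
  exact le_of_lt (term_pos (hl e (Finset.mem_filter.mp he).1))

lemma muEE_pos_iff {H : Finset (Finset V)} (hl : ∀ e ∈ H, 2 ≤ e.card) {x : V}
    (hd : 0 < hdeg H x) (z : V) : 0 < muEE H x z ↔ HNbr H x z := by
  classical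
  rw [muEE]
  have hc : 0 < 1 / (hdeg H x : ℝ) := by positivity
  constructor
  · intro h
    have hS : (H.filter (fun e => x ∈ e ∧ z ∈ e ∧ z ≠ x)).Nonempty := by
      by_contra hcon
      rw [Finset.not_nonempty_iff_eq_empty] at hcon
      rw [hcon] at h
      simp at h
    obtain ⟨e, he⟩ := hS
    rw [Finset.mem_filter] at he
    exact ⟨he.2.2.2.symm, e, he.1, he.2.1, he.2.2.1⟩
  · rintro ⟨hxz, e, he, hxe, hze⟩
    apply mul_pos hc
    apply Finset.sum_pos
    · intro e' he'
      exact term_pos (hl e' (Finset.mem_filter.mp he').1)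
    · exact ⟨e, Finset.mem_filter.mpr ⟨he, hxe, hze, hxz.symm⟩⟩

lemma muEE_eq_of_unique {H : Finset (Finset V)} {x z : V} (hxz : z ≠ x) (e₀ : Finset V)
    (hu : e₀ ∈ H ∧ x ∈ e₀ ∧ z ∈ e₀)
    (huniq : ∀ e, e ∈ H ∧ x ∈ e ∧ z ∈ e → e = e₀) :
    muEE H x z = 1 / (hdeg H x : ℝ) * (1 / ((e₀.card : ℝ) - 1)) := by
  classical
  rw [muEE]
  congr 1
  rw [show H.filter (fun e => x ∈ e ∧ z ∈ e ∧ z ≠ x) = {e₀} from ?_, Finset.sum_singleton]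
  ext a
  rw [Finset.mem_filter, Finset.mem_singleton]
  constructor
  · rintro ⟨ha, hx, hz, _⟩
    exact huniq a ⟨ha, hx, hz⟩
  · rintro rfl
    exact ⟨hu.1, hu.2.1, hu.2.2, hxz⟩

lemma sum_muEE [Fintype V] {H : Finset (Finset V)} (hl : ∀ e ∈ H, 2 ≤ e.card) {x : V}
    (hd : 0 < hdeg H x) : ∑ z, muEE H x z = 1 := by
  classical
  simp only [muEE]
  rw [← Finset.mul_sum]
  simp only [Finset.sum_filter]
  rw [Finset.sum_comm]
  have key : ∀ e ∈ H, (∑ z : V, if x ∈ e ∧ z ∈ e ∧ z ≠ x then 1 / ((e.card : ℝ) - 1) else 0)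
      = if x ∈ e then 1 else 0 := by
    intro e he
    by_cases hx : x ∈ e
    · rw [if_pos hx]
      simp only [hx, true_and]
      rw [← Finset.sum_filter]
      rw [show Finset.univ.filter (fun z => z ∈ e ∧ z ≠ x) = e.erase x from ?_]
      · rw [Finset.sum_const, Finset.card_erase_of_mem hx, nsmul_eq_mul]
        have h2 : 2 ≤ e.card := hl e he
        rw [Nat.cast_sub (by omega), Nat.cast_one, mul_one_div, div_self]
        have : (2 : ℝ) ≤ (e.card : ℝ) := by exact_mod_cast h2
        linarith
      · ext a
        simp [Finset.mem_erase]
        tauto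
    · simp [hx]
  rw [Finset.sum_congr rfl key, Finset.sum_boole]
  have hcard : (Finset.filter (fun e => x ∈ e) H).card = hdeg H x := by
    rw [hdeg]
  rw [hcard]
  exact one_div_mul_cancel (by exact_mod_cast hd.ne' : (hdeg H x : ℝ) ≠ 0)

lemma muEE_eq_of_W1_zero [Fintype V] {H : Finset (Finset V)} {x y : V}
    (hl : ∀ e ∈ H, 2 ≤ e.card) (hx : 0 < hdeg H x) (hy : 0 < hdeg H y)
    (hreach : (HGraph H).Reachable x y)
    (hW : W1 (fun u v => (hdist H u v : ℝ)) (muEE H x) (muEE H y) = 0) :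
    muEE H x = muEE H y := by
  classical
  set μ := muEE H x with hμ
  set ν := muEE H y with hν
  set d : V → V → ℝ := fun u v => (hdist H u v : ℝ) with hdd
  set S : Set ℝ := {c | ∃ ξ : V → V → ℝ, IsCoupling μ ν ξ ∧ c = ∑ u, ∑ v, d u v * ξ u v}
    with hS
  have hμ0 : ∀ z, 0 ≤ μ z := muEE_nonneg hl x
  have hν0 : ∀ z, 0 ≤ ν z := muEE_nonneg hl y
  have hμ1 : ∑ u, μ u = 1 := sum_muEE hl hx
  have hν1 : ∑ u, ν u = 1 := sum_muEE hl hy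
  have hSne : S.Nonempty := by
    refine ⟨∑ u, ∑ v, d u v * (μ u * ν v), fun u v => μ u * ν v, ⟨?_, ?_, ?_⟩, rfl⟩
    · exact fun u v => mul_nonneg (hμ0 u) (hν0 v)
    · intro u; rw [← Finset.mul_sum, hν1, mul_one]
    · intro v; rw [← Finset.sum_mul, hμ1, one_mul]
  have hdist1 : ∀ u v : V, u ≠ v → 0 < μ u → 0 < ν v → (1 : ℝ) ≤ d u v := by
    intro u v huv hμu hνv
    have h1 : HNbr H x u := (muEE_pos_iff hl hx u).mp hμu
    have h2 : HNbr H y v := (muEE_pos_iff hl hy v).mp hνv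
    have hr : (HGraph H).Reachable u v :=
      ((SimpleGraph.Adj.reachable (hnbr_symm h1) : (HGraph H).Reachable u x).trans
        hreach).trans (SimpleGraph.Adj.reachable h2)
    rcases pathlen_of_reachable hr with h | h
    · exact absurd h huv
    · show (1 : ℝ) ≤ ((hdist H u v : ℕ) : ℝ)
      exact_mod_cast one_le_hdist huv h
  have hbound : ∀ z : V, ∀ c ∈ S, μ z - ν z ≤ c ∧ ν z - μ z ≤ c := by
    rintro z c ⟨ξ, ⟨hξ0, hrow, hcol⟩, rfl⟩
    have hterm : ∀ u v, 0 ≤ d u v * ξ u v :=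
      fun u v => mul_nonneg (Nat.cast_nonneg _) (hξ0 u v)
    have hξrow : ∀ u v, ξ u v ≤ μ u := by
      intro u v
      rw [← hrow u]
      exact Finset.single_le_sum (fun i _ => hξ0 u i) (Finset.mem_univ v)
    have hξcol : ∀ u v, ξ u v ≤ ν v := by
      intro u v
      rw [← hcol v]
      exact Finset.single_le_sum (fun i _ => hξ0 i v) (Finset.mem_univ u)
    constructor
    · have h1 : ∑ v, d z v * ξ z v ≤ ∑ u, ∑ v, d u v * ξ u v :=
        Finset.single_le_sum (f := fun u => ∑ v, d u v * ξ u v)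
          (fun i _ => Finset.sum_nonneg fun j _ => hterm i j) (Finset.mem_univ z)
      have h2 : ∑ v ∈ Finset.univ.erase z, d z v * ξ z v ≤ ∑ v, d z v * ξ z v :=
        Finset.sum_le_sum_of_subset_of_nonneg (Finset.subset_univ _)
          (fun i _ _ => hterm z i)
      have h3 : ∑ v ∈ Finset.univ.erase z, ξ z v ≤ ∑ v ∈ Finset.univ.erase z, d z v * ξ z v := by
        apply Finset.sum_le_sum
        intro v hv
        rcases eq_or_lt_of_le (hξ0 z v) with h0 | h0
        · rw [← h0, mul_zero]
        · have hvz : v ≠ z := (Finset.mem_erase.mp hv).1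
          have hd1 : (1 : ℝ) ≤ d z v :=
            hdist1 z v (Ne.symm hvz) (lt_of_lt_of_le h0 (hξrow z v))
              (lt_of_lt_of_le h0 (hξcol z v))
          exact le_mul_of_one_le_left (hξ0 z v) hd1
      have h4 : ∑ v ∈ Finset.univ.erase z, ξ z v = μ z - ξ z z := by
        rw [Finset.sum_erase_eq_sub (Finset.mem_univ z), hrow z]
      have h5 : μ z - ν z ≤ μ z - ξ z z := by
        have := hξcol z z
        linarith
      linarith
    · have h1 : ∑ u, d u z * ξ u z ≤ ∑ u, ∑ v, d u v * ξ u v := by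
        rw [Finset.sum_comm]
        exact Finset.single_le_sum (f := fun v => ∑ u, d u v * ξ u v)
          (fun i _ => Finset.sum_nonneg fun j _ => hterm j i) (Finset.mem_univ z)
      have h2 : ∑ u ∈ Finset.univ.erase z, d u z * ξ u z ≤ ∑ u, d u z * ξ u z :=
        Finset.sum_le_sum_of_subset_of_nonneg (Finset.subset_univ _)
          (fun i _ _ => hterm i z)
      have h3 : ∑ u ∈ Finset.univ.erase z, ξ u z ≤ ∑ u ∈ Finset.univ.erase z, d u z * ξ u z := by
        apply Finset.sum_le_sum
        intro u hu
        rcases eq_or_lt_of_le (hξ0 u z) with h0 | h0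
        · rw [← h0, mul_zero]
        · have huz : u ≠ z := (Finset.mem_erase.mp hu).1
          have hd1 : (1 : ℝ) ≤ d u z :=
            hdist1 u z huz (lt_of_lt_of_le h0 (hξrow u z))
              (lt_of_lt_of_le h0 (hξcol u z))
          exact le_mul_of_one_le_left (hξ0 u z) hd1
      have h4 : ∑ u ∈ Finset.univ.erase z, ξ u z = ν z - ξ z z := by
        rw [Finset.sum_erase_eq_sub (Finset.mem_univ z), hcol z]
      have h5 : ν z - μ z ≤ ν z - ξ z z := by
        have := hξrow z z
        linarith
      linarith
  funext z
  have hle1 : μ z - ν z ≤ sInf S := le_csInf hSne fun c hc => (hbound z c hc).1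
  have hle2 : ν z - μ z ≤ sInf S := le_csInf hSne fun c hc => (hbound z c hc).2
  have h0 : sInf S = 0 := hW
  rw [h0] at hle1 hle2
  linarith

theorem stmt13 [Fintype V] (H : Finset (Finset V))
    (hloopless : ∀ e ∈ H, 2 ≤ e.card)
    (x y : V) (hxy : x ≠ y)
    (hcomp : ∃ n, HPathLen H n x y)
    (ha : ∀ z, HNbr H x z → HNbr H y z →
      (∃! e, e ∈ H ∧ x ∈ e ∧ z ∈ e) ∧ (∃! e, e ∈ H ∧ y ∈ e ∧ z ∈ e))
    (hb : hdeg H x = hdeg H y) (hb' : 0 < hdeg H x)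
    (hc : kappaEE H x y = 1) :
    (∀ z, HNbr H x z ↔ HNbr H y z) ∧
    (∀ z, HNbr H x z → HNbr H y z →
      ∀ e e' : Finset V, e ∈ H → x ∈ e → z ∈ e → e' ∈ H → y ∈ e' → z ∈ e' →
        e.card = e'.card) := by
  classical
  obtain ⟨n₀, hn₀⟩ := hcomp
  have hreach : (HGraph H).Reachable x y := reachable_of_pathlen hn₀
  have hd1 : 1 ≤ hdist H x y := one_le_hdist hxy ⟨n₀, hn₀⟩
  have hdR : (1 : ℝ) ≤ (hdist H x y : ℝ) := by exact_mod_cast hd1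
  have hW0 : W1 (fun u v => (hdist H u v : ℝ)) (muEE H x) (muEE H y) = 0 := by
    rw [kappaEE] at hc
    have hdiv : W1 (fun u v => (hdist H u v : ℝ)) (muEE H x) (muEE H y)
        / (hdist H x y : ℝ) = 0 := by linarith
    rcases div_eq_zero_iff.mp hdiv with h | h
    · exact h
    · linarith
  have hy' : 0 < hdeg H y := hb ▸ hb'
  have hμeq : muEE H x = muEE H y := muEE_eq_of_W1_zero hloopless hb' hy' hreach hW0
  constructor
  · intro z
    rw [← muEE_pos_iff hloopless hb' z, ← muEE_pos_iff hloopless hy' z, hμeq]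
  · intro z h1 h2 e e' he hxe hze he' hye' hze'
    obtain ⟨⟨e₀, he₀, hu⟩, ⟨e₀', he₀', hu'⟩⟩ := ha z h1 h2
    have hex : e = e₀ := hu e ⟨he, hxe, hze⟩
    have hey : e' = e₀' := hu' e' ⟨he', hye', hze'⟩
    have hm1 : muEE H x z = 1 / (hdeg H x : ℝ) * (1 / ((e₀.card : ℝ) - 1)) :=
      muEE_eq_of_unique h1.1.symm e₀ he₀ hu
    have hm2 : muEE H y z = 1 / (hdeg H y : ℝ) * (1 / ((e₀'.card : ℝ) - 1)) :=
      muEE_eq_of_unique h2.1.symm e₀' he₀' hu'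
    have hmeq : muEE H x z = muEE H y z := congrFun hμeq z
    rw [hm1, hm2, ← hb] at hmeq
    have hdpos : (0 : ℝ) < (hdeg H x : ℝ) := by exact_mod_cast hb'
    have hcc : 1 / ((e₀.card : ℝ) - 1) = 1 / ((e₀'.card : ℝ) - 1) := by
      have hne : 1 / (hdeg H x : ℝ) ≠ 0 := by positivity
      exact mul_left_cancel₀ hne hmeq
    have hc1 : (2 : ℝ) ≤ (e₀.card : ℝ) := by exact_mod_cast hloopless e₀ he₀.1
    have hc2 : (2 : ℝ) ≤ (e₀'.card : ℝ) := by exact_mod_cast hloopless e₀' he₀'.1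
    have h1' : (e₀.card : ℝ) - 1 ≠ 0 := by linarith
    have h2' : (e₀'.card : ℝ) - 1 ≠ 0 := by linarith
    field_simp at hcc
    rw [hex, hey]
    exact_mod_cast (by linarith : (e₀.card : ℝ) = e₀'.card)
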